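/- Let X be an A-bounded operator on H admitting an A-adjoint Xs (i.e. A∘Xs = X*∘A), and let Xss be an A-adjoint of Xs (i.e. A∘Xss = Xs*∘A). Then max{‖Xs∘X + Xs∘Xss‖_A, ‖X∘Xs + Xss∘Xs‖_A} = 2·‖X‖_A². -/

import Mathlib

noncomputable def sInner {E : Type*} [NormedAddCommGroup E] [InnerProductSpace ℂ E]
    (A : E →L[ℂ] E) (x y : E) : ℂ := inner ℂ (A x) y

noncomputable def sNorm {E : Type*} [NormedAddCommGroup E] [InnerProductSpace ℂ E]
    (A : E →L[ℂ] E) (x : E) : ℝ := Real.sqrt (sInner A x x).re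

/-- The `A`-operator seminorm. -/
noncomputable def opSNorm {E : Type*} [NormedAddCommGroup E] [InnerProductSpace ℂ E]
    (A T : E →L[ℂ] E) : ℝ := sSup {c | ∃ x : E, sNorm A x = 1 ∧ c = sNorm A (T x)}

/-- The `A`-numerical radius. -/
noncomputable def numRad {E : Type*} [NormedAddCommGroup E] [InnerProductSpace ℂ E]
    (A T : E →L[ℂ] E) : ℝ := sSup {c | ∃ x : E, sNorm A x = 1 ∧ c = ‖sInner A (T x) x‖}

/-- `T` is `A`-bounded. -/
def ABounded {E : Type*} [NormedAddCommGroup E] [InnerProductSpace ℂ E]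
    (A T : E →L[ℂ] E) : Prop := ∃ c > 0, ∀ x : E, sNorm A (T x) ≤ c * sNorm A x

/-- The 2×2 block operator `[[T, X], [Y, S]]` on `H ⊕ H` (with the ℓ² product structure). -/
noncomputable def blk {H : Type*} [NormedAddCommGroup H] [InnerProductSpace ℂ H]
    (T X Y S : H →L[ℂ] H) : WithLp 2 (H × H) →L[ℂ] WithLp 2 (H × H) :=
  ((WithLp.prodContinuousLinearEquiv 2 ℂ H H).symm.toContinuousLinearMap.comp
    (((T.coprod X).prod (Y.coprod S)).comp
      (WithLp.prodContinuousLinearEquiv 2 ℂ H H).toContinuousLinearMap))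

/-- The diagonal operator `𝔸 = diag(A, A)` on `H ⊕ H`. -/
noncomputable def twoA {H : Type*} [NormedAddCommGroup H] [InnerProductSpace ℂ H]
    (A : H →L[ℂ] H) : WithLp 2 (H × H) →L[ℂ] WithLp 2 (H × H) := blk A 0 0 A

set_option linter.unusedSectionVars false

section Aux2
variable {H : Type*} [NormedAddCommGroup H] [InnerProductSpace ℂ H] [CompleteSpace H]
  (A : H →L[ℂ] H)

noncomputable def coreOf (hA : A.IsPositive) : PreInnerProductSpace.Core ℂ H where
  inner x y := sInner A x y
  conj_inner_symm x y := by
    simp only [sInner, ← inner_conj_symm (A y) x, starRingEnd_apply, star_star]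
    rw [← ContinuousLinearMap.adjoint_inner_left A y x,
      ContinuousLinearMap.isSelfAdjoint_iff'.mp hA.isSelfAdjoint]
  re_inner_nonneg x := hA.re_inner_nonneg_left x
  add_left x y z := by simp [sInner, inner_add_left]
  smul_left x y r := by simp [sInner, inner_smul_left, mul_comm]

lemma sInner_self_nonneg (hA : A.IsPositive) (x : H) : 0 ≤ (sInner A x x).re := hA.re_inner_nonneg_left x

lemma cs (hA : A.IsPositive) (x y : H) : ‖sInner A x y‖ ≤ sNorm A x * sNorm A y := by
  have h := InnerProductSpace.Core.inner_mul_inner_self_le (𝕜 := ℂ) (F := H)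
    (c := coreOf A hA) x y
  have hflip : sInner A x y = inner ℂ x (A y) := by
    conv_lhs => rw [sInner, ← ContinuousLinearMap.isSelfAdjoint_iff'.mp hA.isSelfAdjoint,
      ContinuousLinearMap.adjoint_inner_left A y x]
  have hsym : ‖sInner A y x‖ = ‖sInner A x y‖ := by
    rw [hflip, sInner]; exact norm_inner_symm _ _
  refine nonneg_le_nonneg_of_sq_le_sq (mul_nonneg (Real.sqrt_nonneg _) (Real.sqrt_nonneg _)) ?_
  have e : sNorm A x * sNorm A y * (sNorm A x * sNorm A y)
      = (sInner A x x).re * (sInner A y y).re := by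
    unfold sNorm
    rw [show ∀ a b : ℝ, a * b * (a * b) = (a * a) * (b * b) by intros; ring,
      Real.mul_self_sqrt (sInner_self_nonneg A hA x), Real.mul_self_sqrt (sInner_self_nonneg A hA y)]
  rw [e]
  calc ‖sInner A x y‖ * ‖sInner A x y‖ = ‖sInner A x y‖ * ‖sInner A y x‖ := by rw [hsym]
    _ ≤ _ := h

lemma sNorm_nonneg (x : H) : 0 ≤ sNorm A x := Real.sqrt_nonneg _

lemma sNorm_sq (hA : A.IsPositive) (x : H) : sNorm A x * sNorm A x = (sInner A x x).re :=
  Real.mul_self_sqrt (sInner_self_nonneg A hA x)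

lemma sNorm_smul (c : ℂ) (x : H) : sNorm A (c • x) = ‖c‖ * sNorm A x := by
  unfold sNorm sInner
  rw [map_smul, inner_smul_left, inner_smul_right, ← mul_assoc, mul_comm (starRingEnd ℂ c) c,
    Complex.mul_conj, Complex.re_ofReal_mul, Real.sqrt_mul (Complex.normSq_nonneg c)]
  simp [← Complex.norm_def]

lemma sInner_add_right (x y z : H) : sInner A x (y + z) = sInner A x y + sInner A x z := by
  simp [sInner, inner_add_right]

lemma re_le_sns (hA : A.IsPositive) (x y : H) : (sInner A x y).re ≤ sNorm A x * sNorm A y :=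
  (Complex.re_le_norm _).trans (cs A hA x y)

lemma sNorm_triangle (hA : A.IsPositive) (x y : H) :
    sNorm A (x + y) ≤ sNorm A x + sNorm A y := by
  refine nonneg_le_nonneg_of_sq_le_sq (add_nonneg (sNorm_nonneg A x) (sNorm_nonneg A y)) ?_
  rw [sNorm_sq A hA]
  have e : sInner A (x + y) (x + y) = sInner A x x + sInner A x y + sInner A y x
      + sInner A y y := by
    simp only [sInner, map_add, inner_add_left, inner_add_right]; ring
  have h1 := re_le_sns A hA x y
  have h2 := re_le_sns A hA y x
  have := sNorm_sq A hA x
  have := sNorm_sq A hA y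
  rw [e]
  simp only [Complex.add_re]
  nlinarith [sNorm_nonneg A x, sNorm_nonneg A y]

lemma sNorm_eq_of_sub (hA : A.IsPositive) {u v : H} (h : sNorm A (u - v) = 0) :
    sNorm A u = sNorm A v := by
  have hneg : sNorm A (v - u) = 0 := by
    have : v - u = (-1 : ℂ) • (u - v) := by simp [smul_sub]; abel
    rw [this, sNorm_smul]; simp [h]
  have h1 : sNorm A u ≤ sNorm A v := by
    have := sNorm_triangle A hA (u - v) v; simpa [h] using this
  have h2 : sNorm A v ≤ sNorm A u := by
    have := sNorm_triangle A hA (v - u) u; simpa [hneg] using this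
  exact le_antisymm h1 h2

lemma opSNorm_nonneg (T : H →L[ℂ] H) : 0 ≤ opSNorm A T := by
  apply Real.sSup_nonneg
  rintro c ⟨x, hx, rfl⟩
  exact sNorm_nonneg A _

lemma opSNorm_le {T : H →L[ℂ] H} {c : ℝ} (hc : 0 ≤ c)
    (h : ∀ x : H, sNorm A x = 1 → sNorm A (T x) ≤ c) : opSNorm A T ≤ c := by
  apply Real.sSup_le _ hc
  rintro b ⟨x, hx, rfl⟩
  exact h x hx

lemma le_opSNorm {T : H →L[ℂ] H} (hT : ABounded A T) (x : H) :
    sNorm A (T x) ≤ opSNorm A T * sNorm A x := by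
  obtain ⟨c, hc0, hc⟩ := hT
  have bdd : BddAbove {b | ∃ x : H, sNorm A x = 1 ∧ b = sNorm A (T x)} := by
    refine ⟨c, ?_⟩
    rintro b ⟨y, hy, rfl⟩
    simpa [hy] using hc y
  rcases eq_or_lt_of_le (sNorm_nonneg A x) with h0 | hr
  · have hTx : sNorm A (T x) = 0 := le_antisymm (by simpa [← h0] using hc x) (sNorm_nonneg A _)
    rw [hTx, ← h0, mul_zero]
  · set r := sNorm A x with hrdef
    have hy : sNorm A (((r⁻¹ : ℝ) : ℂ) • x) = 1 := by
      rw [sNorm_smul]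
      simp only [Complex.norm_real, Real.norm_eq_abs, abs_inv, abs_of_pos hr]
      field_simp
      exact hrdef.symm
    have mem : sNorm A (T (((r⁻¹ : ℝ) : ℂ) • x)) ∈
        {b | ∃ x : H, sNorm A x = 1 ∧ b = sNorm A (T x)} := ⟨_, hy, rfl⟩
    have hle := le_csSup bdd mem
    rw [map_smul, sNorm_smul] at hle
    simp only [Complex.norm_real, Real.norm_eq_abs, abs_inv, abs_of_pos hr] at hle
    calc sNorm A (T x) = r * (r⁻¹ * sNorm A (T x)) := by field_simp
      _ ≤ r * opSNorm A T := by
          exact mul_le_mul_of_nonneg_left hle (le_of_lt hr)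
      _ = opSNorm A T * r := mul_comm _ _

lemma aBounded_comp {T S : H →L[ℂ] H} (hT : ABounded A T) (hS : ABounded A S) :
    ABounded A (S.comp T) := by
  obtain ⟨c, hc0, hc⟩ := hT
  obtain ⟨d, hd0, hd⟩ := hS
  exact ⟨d * c, by positivity, fun x => by
    calc sNorm A (S (T x)) ≤ d * sNorm A (T x) := hd _
      _ ≤ d * (c * sNorm A x) := mul_le_mul_of_nonneg_left (hc x) hd0.le
      _ = d * c * sNorm A x := by ring⟩

lemma aBounded_add (hA : A.IsPositive) {T S : H →L[ℂ] H} (hT : ABounded A T)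
    (hS : ABounded A S) : ABounded A (T + S) := by
  obtain ⟨c, hc0, hc⟩ := hT
  obtain ⟨d, hd0, hd⟩ := hS
  refine ⟨c + d, by positivity, fun x => ?_⟩
  calc sNorm A (T x + S x) ≤ sNorm A (T x) + sNorm A (S x) := sNorm_triangle A hA _ _
    _ ≤ c * sNorm A x + d * sNorm A x := add_le_add (hc x) (hd x)
    _ = (c + d) * sNorm A x := by ring

section Adj
variable {T S : H →L[ℂ] H}

lemma flip_inner (hTS : A.comp S = (ContinuousLinearMap.adjoint T).comp A) (u v : H) :
    sInner A (S u) v = sInner A u (T v) := by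
  have h : A (S u) = (ContinuousLinearMap.adjoint T) (A u) :=
    congrFun (congrArg DFunLike.coe hTS) u
  rw [sInner, h, ContinuousLinearMap.adjoint_inner_left, sInner]

lemma adj_key (hA : A.IsPositive) (hTS : A.comp S = (ContinuousLinearMap.adjoint T).comp A)
    (x : H) : sNorm A (S x) * sNorm A (S x) = (sInner A x (T (S x))).re := by
  rw [sNorm_sq A hA, flip_inner A hTS]

lemma adj_bounded (hA : A.IsPositive) (hT : ABounded A T)
    (hTS : A.comp S = (ContinuousLinearMap.adjoint T).comp A) : ABounded A S := by
  obtain ⟨c, hc0, hc⟩ := hT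
  refine ⟨c, hc0, fun x => ?_⟩
  have h1 : sNorm A (S x) * sNorm A (S x) ≤ sNorm A x * (c * sNorm A (S x)) := by
    rw [adj_key A hA hTS x]
    calc (sInner A x (T (S x))).re ≤ sNorm A x * sNorm A (T (S x)) := re_le_sns A hA _ _
      _ ≤ sNorm A x * (c * sNorm A (S x)) :=
        mul_le_mul_of_nonneg_left (hc _) (sNorm_nonneg A x)
  rcases eq_or_lt_of_le (sNorm_nonneg A (S x)) with h0 | hpos
  · rw [← h0]; exact mul_nonneg hc0.le (sNorm_nonneg A x)
  · nlinarith

lemma opSNorm_adj (hA : A.IsPositive) (hT : ABounded A T)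
    (hTS : A.comp S = (ContinuousLinearMap.adjoint T).comp A) :
    opSNorm A S = opSNorm A T := by
  have hS : ABounded A S := adj_bounded A hA hT hTS
  refine le_antisymm ?_ ?_
  · refine opSNorm_le A (opSNorm_nonneg A T) fun x hx => ?_
    have h1 : sNorm A (S x) * sNorm A (S x) ≤ 1 * (opSNorm A T * sNorm A (S x)) := by
      rw [adj_key A hA hTS x]
      calc (sInner A x (T (S x))).re ≤ sNorm A x * sNorm A (T (S x)) := re_le_sns A hA _ _
        _ ≤ 1 * (opSNorm A T * sNorm A (S x)) := by
            rw [hx]; exact mul_le_mul_of_nonneg_left (le_opSNorm A hT _) zero_le_one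
    rcases eq_or_lt_of_le (sNorm_nonneg A (S x)) with h0 | hpos
    · rw [← h0]; exact opSNorm_nonneg A T
    · nlinarith
  · refine opSNorm_le A (opSNorm_nonneg A S) fun x hx => ?_
    have hkey : sNorm A (T x) * sNorm A (T x) = (sInner A (S (T x)) x).re := by
      rw [sNorm_sq A hA, flip_inner A hTS]
    have h1 : sNorm A (T x) * sNorm A (T x) ≤ opSNorm A S * sNorm A (T x) := by
      rw [hkey]
      calc (sInner A (S (T x)) x).re ≤ sNorm A (S (T x)) * sNorm A x := re_le_sns A hA _ _
        _ ≤ opSNorm A S * sNorm A (T x) * 1 := by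
            rw [hx]; exact mul_le_mul_of_nonneg_right (le_opSNorm A hS _) zero_le_one
        _ = opSNorm A S * sNorm A (T x) := mul_one _
    rcases eq_or_lt_of_le (sNorm_nonneg A (T x)) with h0 | hpos
    · rw [← h0]; exact opSNorm_nonneg A S
    · nlinarith

lemma opSNorm_comp_adj (hA : A.IsPositive) (hT : ABounded A T)
    (hTS : A.comp S = (ContinuousLinearMap.adjoint T).comp A) :
    opSNorm A (S.comp T) = opSNorm A T ^ 2 := by
  have hS : ABounded A S := adj_bounded A hA hT hTS
  have hST : ABounded A (S.comp T) := aBounded_comp A hT hS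
  refine le_antisymm ?_ ?_
  · refine opSNorm_le A (sq_nonneg _) fun x hx => ?_
    simp only [ContinuousLinearMap.comp_apply]
    have h1 : sNorm A (S (T x)) * sNorm A (S (T x))
        ≤ opSNorm A T ^ 2 * sNorm A (S (T x)) := by
      rw [adj_key A hA hTS (T x)]
      calc (sInner A (T x) (T (S (T x)))).re
          ≤ sNorm A (T x) * sNorm A (T (S (T x))) := re_le_sns A hA _ _
        _ ≤ (opSNorm A T * sNorm A x) * (opSNorm A T * sNorm A (S (T x))) :=
            mul_le_mul (le_opSNorm A hT _) (le_opSNorm A hT _) (sNorm_nonneg A _)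
              (mul_nonneg (opSNorm_nonneg A T) (sNorm_nonneg A x))
        _ = opSNorm A T ^ 2 * sNorm A (S (T x)) := by rw [hx]; ring
    rcases eq_or_lt_of_le (sNorm_nonneg A (S (T x))) with h0 | hpos
    · rw [← h0]; exact sq_nonneg _
    · nlinarith
  · have hM : 0 ≤ opSNorm A (S.comp T) := opSNorm_nonneg A _
    have hle : opSNorm A T ≤ Real.sqrt (opSNorm A (S.comp T)) := by
      refine opSNorm_le A (Real.sqrt_nonneg _) fun x hx => ?_
      have hkey : sNorm A (T x) * sNorm A (T x) = (sInner A (S (T x)) x).re := by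
        rw [sNorm_sq A hA, flip_inner A hTS]
      have h1 : sNorm A (T x) * sNorm A (T x) ≤ opSNorm A (S.comp T) := by
        rw [hkey]
        calc (sInner A (S (T x)) x).re ≤ sNorm A (S (T x)) * sNorm A x := re_le_sns A hA _ _
          _ ≤ (opSNorm A (S.comp T) * sNorm A x) * sNorm A x := by
              refine mul_le_mul_of_nonneg_right ?_ (sNorm_nonneg A x)
              exact le_opSNorm A hST x
          _ = opSNorm A (S.comp T) := by rw [hx]; ring
      calc sNorm A (T x) = Real.sqrt (sNorm A (T x) * sNorm A (T x)) :=
            (Real.sqrt_mul_self (sNorm_nonneg A _)).symm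
        _ ≤ Real.sqrt (opSNorm A (S.comp T)) := Real.sqrt_le_sqrt h1
    calc opSNorm A T ^ 2 ≤ Real.sqrt (opSNorm A (S.comp T)) ^ 2 :=
        pow_le_pow_left₀ (opSNorm_nonneg A T) hle 2
      _ = opSNorm A (S.comp T) := Real.sq_sqrt hM

end Adj

lemma opSNorm_congr {T S : H →L[ℂ] H} (h : ∀ x, sNorm A (T x) = sNorm A (S x)) :
    opSNorm A T = opSNorm A S := by
  unfold opSNorm
  congr 1
  ext c
  constructor
  · rintro ⟨x, hx, rfl⟩; exact ⟨x, hx, h x⟩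
  · rintro ⟨x, hx, rfl⟩; exact ⟨x, hx, (h x).symm⟩

lemma opSNorm_double (hA : A.IsPositive) {T : H →L[ℂ] H} (hT : ABounded A T) :
    opSNorm A (T + T) = 2 * opSNorm A T := by
  have hTT : ABounded A (T + T) := aBounded_add A hA hT hT
  have hpt : ∀ x : H, sNorm A ((T + T) x) = 2 * sNorm A (T x) := by
    intro x
    have : (T + T) x = ((2 : ℂ)) • T x := by
      simp [ContinuousLinearMap.add_apply, two_smul]
    rw [this, sNorm_smul]
    norm_num
  refine le_antisymm ?_ ?_
  · refine opSNorm_le A (mul_nonneg zero_le_two (opSNorm_nonneg A T)) fun x hx => ?_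
    rw [hpt x]
    have := le_opSNorm A hT x
    rw [hx, mul_one] at this
    linarith
  · have h2 : opSNorm A T ≤ opSNorm A (T + T) / 2 := by
      refine opSNorm_le A (by linarith [opSNorm_nonneg A (T + T)]) fun x hx => ?_
      have := le_opSNorm A hTT x
      rw [hx, mul_one, hpt x] at this
      linarith
    linarith


end Aux2

theorem stmt11 {H : Type*} [NormedAddCommGroup H] [InnerProductSpace ℂ H] [CompleteSpace H]
    (A : H →L[ℂ] H) (hA : A.IsPositive)
    (X Xs Xss : H →L[ℂ] H) (hX : ABounded A X)
    (hXs : A.comp Xs = (ContinuousLinearMap.adjoint X).comp A)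
    (hXss : A.comp Xss = (ContinuousLinearMap.adjoint Xs).comp A) :
    max (opSNorm A (Xs.comp X + Xs.comp Xss)) (opSNorm A (X.comp Xs + Xss.comp Xs)) =
      2 * (opSNorm A X) ^ 2 := by
  have hXsB : ABounded A Xs := adj_bounded A hA hX hXs
  have hXssB : ABounded A Xss := adj_bounded A hA hXsB hXss
  have hNs : opSNorm A Xs = opSNorm A X := opSNorm_adj A hA hX hXs
  have h1 : opSNorm A (Xs.comp X) = opSNorm A X ^ 2 := opSNorm_comp_adj A hA hX hXs
  have h2 : opSNorm A (Xss.comp Xs) = opSNorm A Xs ^ 2 := opSNorm_comp_adj A hA hXsB hXss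
  have hAXX : A.comp Xss = A.comp X := by
    have h := congrArg ContinuousLinearMap.adjoint hXs
    rw [ContinuousLinearMap.adjoint_comp, ContinuousLinearMap.adjoint_comp,
      ContinuousLinearMap.adjoint_adjoint,
      ContinuousLinearMap.isSelfAdjoint_iff'.mp hA.isSelfAdjoint] at h
    rw [hXss, h]
  have hnull : ∀ z : H, sNorm A (Xss z - X z) = 0 := by
    intro z
    have hz : A (Xss z - X z) = 0 := by
      have := congrFun (congrArg DFunLike.coe hAXX) z
      simp only [ContinuousLinearMap.comp_apply] at this
      simp [map_sub, this]
    unfold sNorm sInner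
    rw [hz]
    simp
  have hnull' : ∀ z : H, sNorm A (X z - Xss z) = 0 := by
    intro z
    have : X z - Xss z = (-1 : ℂ) • (Xss z - X z) := by simp
    rw [this, sNorm_smul, hnull z, mul_zero]
  have e1 : opSNorm A (Xs.comp X + Xs.comp Xss) = opSNorm A (Xs.comp X + Xs.comp X) := by
    refine opSNorm_congr A fun x => ?_
    refine (sNorm_eq_of_sub A hA ?_)
    have hd : (Xs.comp X + Xs.comp Xss) x - (Xs.comp X + Xs.comp X) x
        = Xs (Xss x - X x) := by
      simp [ContinuousLinearMap.add_apply, ContinuousLinearMap.comp_apply, map_sub]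
    rw [hd]
    obtain ⟨c, hc0, hc⟩ := hXsB
    refine le_antisymm ?_ (sNorm_nonneg A _)
    calc sNorm A (Xs (Xss x - X x)) ≤ c * sNorm A (Xss x - X x) := hc _
      _ = 0 := by rw [hnull x, mul_zero]
  have e2 : opSNorm A (X.comp Xs + Xss.comp Xs) = opSNorm A (Xss.comp Xs + Xss.comp Xs) := by
    refine opSNorm_congr A fun x => ?_
    refine (sNorm_eq_of_sub A hA ?_)
    have hd : (X.comp Xs + Xss.comp Xs) x - (Xss.comp Xs + Xss.comp Xs) x
        = X (Xs x) - Xss (Xs x) := by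
      simp [ContinuousLinearMap.add_apply, ContinuousLinearMap.comp_apply]
    rw [hd]
    exact hnull' (Xs x)
  have hXsX : ABounded A (Xs.comp X) := aBounded_comp A hX hXsB
  have hXssXs : ABounded A (Xss.comp Xs) := aBounded_comp A hXsB hXssB
  rw [e1, e2, opSNorm_double A hA hXsX, opSNorm_double A hA hXssXs, h1, h2, hNs, max_self]
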